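/- arXiv:1406.1849 — 4 statements merged into one kernel-verified Lean document; each statement's English description precedes it below -/
import Mathlib

section
/- Let 𝒜 be a finite set, 𝒢=(𝒱,ℰ) a countable locally finite undirected graph without self-loops or multiple edges, and X ⊆ 𝒜^𝒱 an n.n.constraint space. Then X is a topological Markov field. -/
open scoped Classical

namespace HC

variable {V : Type*} {A : Type*}

/-- The external vertex boundary of a set of vertices. -/
def boundary (G : SimpleGraph V) (F : Set V) : Set V :=
  {u | u ∉ F ∧ ∃ v ∈ F, G.Adj u v}

/-- The language of `X` on `F`: the set of patterns on `F` appearing in `X`. -/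
def lang (X : Set (V → A)) (F : Set V) : Set (F → A) :=
  F.restrict '' X

/-- The `n`-ball around `v` in the graph metric. -/
def ballSet (G : SimpleGraph V) (v : V) (n : ℕ) : Set V :=
  {u | ∃ p : G.Walk v u, p.length ≤ n}

/-- Asymptotic pairs: pairs of configurations in `X` differing at finitely many sites. -/
def Delta (X : Set (V → A)) : Set ((V → A) × (V → A)) :=
  {p | p.1 ∈ X ∧ p.2 ∈ X ∧ {v | p.1 v ≠ p.2 v}.Finite}

/-- Topological Markov field. -/
def IsTMF [TopologicalSpace A] (G : SimpleGraph V) (X : Set (V → A)) : Prop :=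
  IsClosed X ∧
    ∀ x ∈ X, ∀ y ∈ X, ∀ F : Set V, F.Finite →
      (∀ u ∈ boundary G F, x u = y u) →
      (fun v => if v ∈ F then x v else y v) ∈ X

/-- Nearest neighbour constraint space: the set of configurations avoiding a
set of forbidden patterns on finite cliques. -/
def IsNNConstraint (G : SimpleGraph V) (X : Set (V → A)) : Prop :=
  ∃ 𝓕 : ∀ F : Set V, Set (F → A),
    X = {x : V → A | ∀ F : Set V, F.Finite → G.IsClique F → F.restrict x ∉ 𝓕 F}

/-- `s` is a safe symbol for `X`. -/
def IsSafeSymbol (X : Set (V → A)) (s : A) : Prop :=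
  ∀ x ∈ X, ∀ S : Set V, (fun v => if v ∈ S then x v else s) ∈ X

/-- The pattern `(c at v, d at w)` belongs to the language of `X`. -/
def edgeB (X : Set (V → A)) (v w : V) (c d : A) : Prop :=
  ∃ x ∈ X, x v = c ∧ x w = d

/-- The single-site pattern `c at v` belongs to the language of `X`. -/
def siteB (X : Set (V → A)) (v : V) (c : A) : Prop :=
  ∃ x ∈ X, x v = c

/-- The pairs `(x,y)` and `(z,w)` are Markov-similar. -/
def MarkovSimilar (G : SimpleGraph V) (x y z w : V → A) : Prop :=
  ∃ S : Set V, S.Finite ∧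
    (∀ u, u ∉ S → x u = y u ∧ z u = w u) ∧
    (∀ u, u ∈ S ∪ boundary G S → x u = z u ∧ y u = w u)

/-- A Markov cocycle on `X` (realised as a real function on pairs of
configurations, vanishing off the asymptotic relation `Δ_X`). -/
def IsMarkovCocycle (G : SimpleGraph V) (X : Set (V → A))
    (M : (V → A) → (V → A) → ℝ) : Prop :=
  (∀ x y : V → A, (x, y) ∉ Delta X → M x y = 0) ∧
  (∀ x y z : V → A, (x, y) ∈ Delta X → (y, z) ∈ Delta X → M x z = M x y + M y z) ∧
  (∀ x y z w : V → A, (x, y) ∈ Delta X → (z, w) ∈ Delta X →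
    MarkovSimilar G x y z w → M x y = M z w)

/-- A nearest neighbour interaction: a real weight for each pattern,
vanishing on patterns whose domain is not a finite clique. -/
def IsNNInteraction (G : SimpleGraph V) (U : ∀ F : Set V, (F → A) → ℝ) : Prop :=
  ∀ F : Set V, ¬(F.Finite ∧ G.IsClique F) → ∀ p : F → A, U F p = 0

/-- `Σ_{F ⊆ V finite} (U(y|_F) - U(x|_F))`. -/
noncomputable def gibbsSum (U : ∀ F : Set V, (F → A) → ℝ) (x y : V → A) : ℝ :=
  ∑ᶠ F : Set V, (U F (F.restrict y) - U F (F.restrict x))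

/-- A Gibbs cocycle with some nearest neighbour interaction. -/
def IsGibbsCocycle (G : SimpleGraph V) (X : Set (V → A))
    (M : (V → A) → (V → A) → ℝ) : Prop :=
  (∀ x y : V → A, (x, y) ∉ Delta X → M x y = 0) ∧
  ∃ U : ∀ F : Set V, (F → A) → ℝ, IsNNInteraction G U ∧
    ∀ x y : V → A, (x, y) ∈ Delta X → M x y = gibbsSum U x y

/-- The space `𝐌_X` of Markov cocycles on `X`. -/
def markovSet (G : SimpleGraph V) (X : Set (V → A)) :
    Set ((V → A) → (V → A) → ℝ) :=
  {M | IsMarkovCocycle G X M}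

/-- The space `𝐆_X` of Gibbs cocycles with nearest neighbour interactions on `X`. -/
def gibbsSet (G : SimpleGraph V) (X : Set (V → A)) :
    Set ((V → A) → (V → A) → ℝ) :=
  {M | IsGibbsCocycle G X M}

/-- `X` is Hammersley-Clifford: `𝐌_X = 𝐆_X`. -/
def IsHammersleyClifford (G : SimpleGraph V) (X : Set (V → A)) : Prop :=
  markovSet G X = gibbsSet G X

/-- The action of a permutation of the vertices on configurations. -/
def confAct (g : Equiv.Perm V) (x : V → A) : V → A :=
  fun v => x (g⁻¹ v)

/-- `S` consists of automorphisms of the graph `G`. -/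
def PreservesAdj (G : SimpleGraph V) (S : Subgroup (Equiv.Perm V)) : Prop :=
  ∀ g ∈ S, ∀ u v : V, G.Adj (g u) (g v) ↔ G.Adj u v

/-- `X` is invariant under the subgroup `S`. -/
def InvariantSpace (S : Subgroup (Equiv.Perm V)) (X : Set (V → A)) : Prop :=
  ∀ g ∈ S, confAct g '' X = X

/-- The cocycle `M` is `S`-invariant. -/
def InvariantCocycle (S : Subgroup (Equiv.Perm V)) (M : (V → A) → (V → A) → ℝ) : Prop :=
  ∀ g ∈ S, ∀ x y : V → A, M (confAct g x) (confAct g y) = M x y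

/-- The interaction `U` is `S`-invariant: `U(ga) = U(a)` for every pattern `a`. -/
def InvariantInteraction (S : Subgroup (Equiv.Perm V))
    (U : ∀ F : Set V, (F → A) → ℝ) : Prop :=
  ∀ g ∈ S, ∀ F : Set V, ∀ x : V → A,
    U (⇑g '' F) ((⇑g '' F).restrict (confAct g x)) = U F (F.restrict x)

/-- The space `𝐌^G_X` of `S`-invariant Markov cocycles on `X`. -/
def markovSetInv (G : SimpleGraph V) (S : Subgroup (Equiv.Perm V)) (X : Set (V → A)) :
    Set ((V → A) → (V → A) → ℝ) :=
  {M | IsMarkovCocycle G X M ∧ InvariantCocycle S M}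

/-- The space `𝐆^G_X` of Gibbs cocycles with `S`-invariant nearest neighbour
interactions on `X`. -/
def gibbsSetInv (G : SimpleGraph V) (S : Subgroup (Equiv.Perm V)) (X : Set (V → A)) :
    Set ((V → A) → (V → A) → ℝ) :=
  {M | (∀ x y : V → A, (x, y) ∉ Delta X → M x y = 0) ∧
    ∃ U : ∀ F : Set V, (F → A) → ℝ, IsNNInteraction G U ∧ InvariantInteraction S U ∧
      ∀ x y : V → A, (x, y) ∈ Delta X → M x y = gibbsSum U x y}

/-- `X` is `G`-Hammersley-Clifford: `𝐌^G_X = 𝐆^G_X`. -/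
def IsGHammersleyClifford (G : SimpleGraph V) (S : Subgroup (Equiv.Perm V))
    (X : Set (V → A)) : Prop :=
  markovSetInv G S X = gibbsSetInv G S X

/-- The symbol `a` can be folded into the symbol `b` in `X`. -/
def FoldsInto (G : SimpleGraph V) (X : Set (V → A)) (a b : A) : Prop :=
  a ≠ b ∧
    ∀ v₁ v₂ v₃ : V, G.Adj v₁ v₂ → G.Adj v₂ v₃ → ∀ c : A,
      edgeB X v₁ v₂ a c →
        edgeB X v₁ v₂ b c ∧ edgeB X v₂ v₃ c b ∧
          ∃ x ∈ X, ∀ u ∈ boundary G (ballSet G v₁ 1), x u = b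

/-- `X ∩ (𝒜∖{a})^𝒱`. -/
def foldSpace (X : Set (V → A)) (a : A) : Set (V → A) :=
  X ∩ {x | ∀ v, x v ≠ a}

/-- `Y` is a fold of `X` (and `X` an unfold of `Y`). -/
def IsFoldOf (G : SimpleGraph V) (Y X : Set (V → A)) : Prop :=
  ∃ a b : A, FoldsInto G X a b ∧ Y = foldSpace X a

/-- `P₁, P₂` are the partite classes of a bipartition of `G`. -/
def IsBipartition (G : SimpleGraph V) (P₁ P₂ : Set V) : Prop :=
  (∀ v : V, v ∈ P₁ ∨ v ∈ P₂) ∧ Disjoint P₁ P₂ ∧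
    ∀ u v : V, G.Adj u v → (u ∈ P₁ ∧ v ∈ P₂) ∨ (u ∈ P₂ ∧ v ∈ P₁)

/-- `G` is bipartite. -/
def Bipartite (G : SimpleGraph V) : Prop :=
  ∃ P₁ P₂ : Set V, IsBipartition G P₁ P₂

/-- `θ^v_c(x)`: change the value of `x` at `v` to `c`. -/
noncomputable def theta (x : V → A) (v : V) (c : A) : V → A :=
  fun u => if u = v then c else x u

/-- `θ^{w₁,…,w_r}_{c₁,…,c_r}(x)`: change the value of `x` at each `w i` to `c i`. -/
noncomputable def multiUpdate (x : V → A) {r : ℕ} (w : Fin r → V) (c : Fin r → A) :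
    V → A :=
  fun u => if h : ∃ i, w i = u then c h.choose else x u

/-- Restriction of a cocycle to the asymptotic pairs of a subspace `Y`. -/
noncomputable def restrictCocycle (Y : Set (V → A)) (M : (V → A) → (V → A) → ℝ) :
    (V → A) → (V → A) → ℝ :=
  fun x y => if (x, y) ∈ Delta Y then M x y else 0

/-- The pair `(x,y)` is `U`-good for the cocycle `M`. -/
def VGood (M : (V → A) → (V → A) → ℝ) (U : ∀ F : Set V, (F → A) → ℝ)
    (x y : V → A) : Prop :=
  M x y = gibbsSum U x y

/-- `𝒱₁`: vertices `v` admitting a neighbour `w` with `(a,a) ∈ ℬ_{v,w}(X)`. -/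
def Vone (G : SimpleGraph V) (X : Set (V → A)) (a : A) : Set V :=
  {v | ∃ w, G.Adj v w ∧ edgeB X v w a a}

/-- `𝒱₂`: vertices not in `𝒱₁` where the symbol `a` can appear. -/
def Vtwo (G : SimpleGraph V) (X : Set (V → A)) (a : A) : Set V :=
  {v | v ∉ Vone G X a ∧ siteB X v a}

/-- The space of graph homomorphisms from `G` to `H`, as a configuration space. -/
def homSpace {B : Type*} (G : SimpleGraph V) (H : SimpleGraph B) : Set (V → B) :=
  {x | ∀ v w : V, G.Adj v w → H.Adj (x v) (x w)}

/-- Every n.n.constraint space is a topological Markov field. -/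
theorem statement1 [Countable V] [Fintype A] [TopologicalSpace A] [DiscreteTopology A]
    (G : SimpleGraph V) (hlf : ∀ v : V, (G.neighborSet v).Finite)
    (X : Set (V → A)) (hX : IsNNConstraint G X) :
    IsTMF G X := by
  obtain ⟨𝓕, rfl⟩ := hX
  constructor
  · have hrw : {x : V → A | ∀ F : Set V, F.Finite → G.IsClique F → F.restrict x ∉ 𝓕 F}
        = ⋂ F : Set V, {x : V → A | F.Finite → G.IsClique F → F.restrict x ∉ 𝓕 F} := by
      ext x; simp [Set.mem_iInter]
    rw [hrw]
    refine isClosed_iInter fun F => ?_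
    by_cases hF : F.Finite ∧ G.IsClique F
    · have hrw2 : {x : V → A | F.Finite → G.IsClique F → F.restrict x ∉ 𝓕 F}
          = F.restrict ⁻¹' (𝓕 F)ᶜ := by
        ext x; simp [hF.1, hF.2]
      rw [hrw2]
      have : Finite F := hF.1.to_subtype
      exact (isClosed_discrete _).preimage (continuous_pi fun i => continuous_apply _)
    · have hrw2 : {x : V → A | F.Finite → G.IsClique F → F.restrict x ∉ 𝓕 F} = Set.univ := by
        ext x; simp only [Set.mem_setOf_eq, Set.mem_univ, iff_true]
        intro h1 h2 _; exact hF ⟨h1, h2⟩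
      rw [hrw2]; exact isClosed_univ
  · intro x hx y hy F hF hbd C hCfin hC
    by_cases hCF : ∃ v ∈ C, v ∈ F
    · have hrw : C.restrict (fun v => if v ∈ F then x v else y v) = C.restrict x := by
        funext u
        show (if (u : V) ∈ F then x u else y u) = x u
        by_cases hu : (u : V) ∈ F
        · simp [hu]
        · simp only [hu, if_false]
          obtain ⟨v, hvC, hvF⟩ := hCF
          have hne : (u : V) ≠ v := fun h => hu (h ▸ hvF)
          have hadj : G.Adj (u : V) v := hC u.2 hvC hne
          exact (hbd u ⟨hu, v, hvF, hadj⟩).symm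
      rw [hrw]; exact hx C hCfin hC
    · have hrw : C.restrict (fun v => if v ∈ F then x v else y v) = C.restrict y := by
        funext u
        have : (u : V) ∉ F := fun h => hCF ⟨u, u.2, h⟩
        show (if (u : V) ∈ F then x u else y u) = y u
        exact if_neg this
      rw [hrw]; exact hy C hCfin hC

end HC
end

section
/- (Strong Hammersley-Clifford theorem, part 1.) Let X ⊆ 𝒜^𝒱 be a topological Markov field with a safe symbol. Then every Markov cocycle on X is a Gibbs cocycle with some nearest neighbour interaction, i.e. 𝐌_X = 𝐆_X. -/
open scoped Classical

namespace HC

variable {V : Type*} {A : Type*}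

/-! ### Auxiliary material for the proof of Statement 4 -/

section Statement4Aux

lemma closure_finite (G : SimpleGraph V) (hlf : ∀ v : V, (G.neighborSet v).Finite)
    {S : Set V} (hS : S.Finite) : (S ∪ boundary G S).Finite := by
  refine hS.union (Set.Finite.subset (Set.Finite.biUnion hS (fun v _ => hlf v)) ?_)
  rintro u ⟨huS, v, hvS, hadj⟩
  exact Set.mem_biUnion hvS hadj.symm

lemma clique_subset_closure {G : SimpleGraph V} {F S : Set V} (hF : G.IsClique F)
    {v : V} (hvF : v ∈ F) (hvS : v ∈ S) : F ⊆ S ∪ boundary G S := by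
  intro u hu
  by_cases huS : u ∈ S
  · exact Or.inl huS
  · rcases eq_or_ne u v with rfl | hne
    · exact absurd hvS huS
    · exact Or.inr ⟨huS, v, hvS, hF hu hvF hne⟩

lemma finsum_set_eq_sum_powerset (g : Set V → ℝ) (C : Finset V)
    (h : ∀ F : Set V, g F ≠ 0 → F.Finite ∧ F ⊆ ↑C) :
    ∑ᶠ F, g F = ∑ F ∈ C.powerset, g ↑F := by
  classical
  have hinj : ∀ a ∈ C.powerset, ∀ b ∈ C.powerset,
      (fun F : Finset V => (F : Set V)) a = (fun F : Finset V => (F : Set V)) b → a = b :=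
    fun a _ b _ hab => Finset.coe_injective hab
  have hsupp : Function.support g ⊆
      ↑(C.powerset.image (fun F : Finset V => (F : Set V))) := by
    intro F hF
    rcases h F hF with ⟨hfin, hsub⟩
    simp only [Finset.coe_image, Set.mem_image, Finset.mem_coe, Finset.mem_powerset]
    refine ⟨hfin.toFinset, ?_, hfin.coe_toFinset⟩
    rw [← Finset.coe_subset, hfin.coe_toFinset]
    exact hsub
  rw [finsum_eq_finset_sum_of_support_subset g hsupp, Finset.sum_image hinj]

lemma term_support {G : SimpleGraph V} {U : ∀ F : Set V, (F → A) → ℝ}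
    (hU : IsNNInteraction G U) (x y : V → A) (F : Set V)
    (h : U F (F.restrict y) - U F (F.restrict x) ≠ 0) :
    (F.Finite ∧ G.IsClique F) ∧ ∃ v ∈ F, x v ≠ y v := by
  constructor
  · by_contra hc
    rw [hU F hc, hU F hc, sub_zero] at h
    exact h rfl
  · by_contra hc
    push_neg at hc
    have : F.restrict x = F.restrict y := funext fun v => hc v v.2
    rw [this, sub_self] at h
    exact h rfl

lemma gibbsSum_eq_sum {G : SimpleGraph V} {U : ∀ F : Set V, (F → A) → ℝ}
    (hU : IsNNInteraction G U) (x y : V → A) (C : Finset V)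
    (hC : ∀ F : Set V, G.IsClique F → (∃ v ∈ F, x v ≠ y v) → F ⊆ ↑C) :
    gibbsSum U x y = ∑ F ∈ C.powerset,
      (U ↑F ((↑F : Set V).restrict y) - U ↑F ((↑F : Set V).restrict x)) := by
  refine finsum_set_eq_sum_powerset _ C fun F hF => ?_
  obtain ⟨⟨hfin, hclique⟩, hv⟩ := term_support hU x y F hF
  exact ⟨hfin, hC F hclique hv⟩

/-- `patch s z E` is the configuration equal to `z` on `E` and `s` elsewhere. -/
noncomputable def patch (s : A) (z : V → A) (E : Finset V) : V → A :=
  fun v => if v ∈ E then z v else s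

noncomputable def phiC (M : (V → A) → (V → A) → ℝ) (s : A) (z : V → A) (E : Finset V) : ℝ :=
  M (fun _ => s) (patch s z E)

noncomputable def psiC (M : (V → A) → (V → A) → ℝ) (s : A) (z : V → A) (F : Finset V) : ℝ :=
  ∑ E ∈ F.powerset, (-1 : ℝ) ^ (F.card + E.card) * phiC M s z E

noncomputable def Uof (G : SimpleGraph V) (M : (V → A) → (V → A) → ℝ) (s : A) :
    ∀ F : Set V, (F → A) → ℝ := fun F p =>
  if h : F.Finite ∧ G.IsClique F then
    psiC M s (fun v => if hv : v ∈ F then p ⟨v, hv⟩ else s) h.1.toFinset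
  else 0

lemma Uof_isNN (G : SimpleGraph V) (M : (V → A) → (V → A) → ℝ) (s : A) :
    IsNNInteraction G (Uof G M s) := fun _ h _ => dif_neg h

lemma psiC_congr {M : (V → A) → (V → A) → ℝ} {s : A} {z₁ z₂ : V → A} {F : Finset V}
    (h : ∀ w ∈ F, z₁ w = z₂ w) : psiC M s z₁ F = psiC M s z₂ F := by
  refine Finset.sum_congr rfl fun E hE => ?_
  have hEF : E ⊆ F := Finset.mem_powerset.1 hE
  congr 1
  unfold phiC
  congr 1
  funext w
  unfold patch
  split
  · next hw => exact h w (hEF hw)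
  · rfl

lemma Uof_coe {G : SimpleGraph V} {M : (V → A) → (V → A) → ℝ} {s : A}
    (F : Finset V) (hcl : G.IsClique (↑F : Set V)) (z : V → A) :
    Uof G M s ↑F ((↑F : Set V).restrict z) = psiC M s z F := by
  have hfc : (↑F : Set V).Finite := F.finite_toSet
  rw [Uof, dif_pos (⟨hfc, hcl⟩ : (↑F : Set V).Finite ∧ G.IsClique (↑F : Set V))]
  have h1 : hfc.toFinset = F := by ext a; simp
  rw [h1]
  refine psiC_congr fun w hw => ?_
  rw [dif_pos (show w ∈ (↑F : Set V) from hw)]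
  rfl

/-- Möbius inversion over powersets. -/
lemma mobius_sum (D : Finset V) : ∀ φ : Finset V → ℝ,
    ∑ F ∈ D.powerset, ∑ E ∈ F.powerset, (-1 : ℝ) ^ (F.card + E.card) * φ E = φ D := by
  classical
  induction D using Finset.induction_on with
  | empty => intro φ; simp
  | @insert a D ha ih =>
    intro φ
    rw [Finset.sum_powerset_insert ha, ih φ]
    have h1 : ∀ F ∈ D.powerset,
        ∑ E ∈ (insert a F).powerset, (-1 : ℝ) ^ ((insert a F).card + E.card) * φ E
          = (∑ E ∈ F.powerset, -((-1 : ℝ) ^ (F.card + E.card) * φ E))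
            + ∑ E ∈ F.powerset, (-1 : ℝ) ^ (F.card + E.card) * φ (insert a E) := by
      intro F hF
      have haF : a ∉ F := fun h => ha (Finset.mem_powerset.1 hF h)
      rw [Finset.sum_powerset_insert haF, Finset.card_insert_of_notMem haF]
      congr 1
      · refine Finset.sum_congr rfl fun E _ => ?_
        ring
      · refine Finset.sum_congr rfl fun E hE => ?_
        have haE : a ∉ E := fun h => haF (Finset.mem_powerset.1 hE h)
        rw [Finset.card_insert_of_notMem haE]
        ring
    rw [Finset.sum_congr rfl h1, Finset.sum_add_distrib]
    simp only [Finset.sum_neg_distrib]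
    rw [ih φ, show (∑ F ∈ D.powerset, ∑ E ∈ F.powerset,
      (-1 : ℝ) ^ (F.card + E.card) * φ (insert a E)) = φ (insert a D) from ih _]
    ring

lemma patch_mem {X : Set (V → A)} {s : A} (hs : IsSafeSymbol X s) {z : V → A}
    (hz : z ∈ X) (E : Finset V) : patch s z E ∈ X := by
  convert hs z hz ↑E using 1
  funext v
  by_cases h : v ∈ E <;> simp [patch, h]

lemma patch_diff_star {s : A} (z : V → A) (E : Finset V) :
    {v | (fun _ : V => s) v ≠ patch s z E v}.Finite := by
  refine Set.Finite.subset E.finite_toSet fun v hv => ?_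
  by_contra hvE
  rw [Finset.mem_coe] at hvE
  exact hv (by simp [patch, hvE])

lemma M_sub {G : SimpleGraph V} {X : Set (V → A)} {M : (V → A) → (V → A) → ℝ} {s : A}
    (hM : IsMarkovCocycle G X M) (hstar : (fun _ : V => s) ∈ X)
    {a b : V → A} (ha : a ∈ X) (hb : b ∈ X)
    (hsa : {v | (fun _ : V => s) v ≠ a v}.Finite)
    (hsb : {v | (fun _ : V => s) v ≠ b v}.Finite) :
    M a b = M (fun _ => s) b - M (fun _ => s) a := by
  have hab : {v | a v ≠ b v}.Finite := by
    refine (hsa.union hsb).subset fun v hv => ?_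
    by_contra hc
    push_neg at hc
    simp only [Set.mem_union, Set.mem_setOf_eq, not_or, not_not] at hc
    exact hv (hc.1.symm.trans hc.2)
  have := hM.2.1 (fun _ => s) a b ⟨hstar, ha, hsa⟩ ⟨ha, hb, hab⟩
  linarith

lemma phi_swap {G : SimpleGraph V} {X : Set (V → A)} {M : (V → A) → (V → A) → ℝ} {s : A}
    (hM : IsMarkovCocycle G X M) (hs : IsSafeSymbol X s)
    (hstar : (fun _ : V => s) ∈ X) {z : V → A} (hz : z ∈ X) {u v : V}
    (huv : ¬ G.Adj u v) (hne : u ≠ v) (E : Finset V) (hu : u ∉ E) (hv : v ∉ E) :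
    phiC M s z (insert u (insert v E)) - phiC M s z (insert v E)
      = phiC M s z (insert u E) - phiC M s z E := by
  set a := patch s z E with hadef
  set b := patch s z (insert u E) with hbdef
  set c := patch s z (insert v E) with hcdef
  set d := patch s z (insert u (insert v E)) with hddef
  have haX : a ∈ X := patch_mem hs hz E
  have hbX : b ∈ X := patch_mem hs hz _
  have hcX : c ∈ X := patch_mem hs hz _
  have hdX : d ∈ X := patch_mem hs hz _
  have hab : ∀ t, t ≠ u → a t = b t := by
    intro t ht
    simp only [hadef, hbdef, patch, Finset.mem_insert, ht, false_or]
  have hcd : ∀ t, t ≠ u → c t = d t := by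
    intro t ht
    simp only [hcdef, hddef, patch, Finset.mem_insert, ht, false_or]
  have hdab : {t | a t ≠ b t}.Finite :=
    Set.Finite.subset (Set.finite_singleton u) fun t ht => by
      by_contra htu; exact ht (hab t htu)
  have hdcd : {t | c t ≠ d t}.Finite :=
    Set.Finite.subset (Set.finite_singleton u) fun t ht => by
      by_contra htu; exact ht (hcd t htu)
  have hDab : (a, b) ∈ Delta X := ⟨haX, hbX, hdab⟩
  have hDcd : (c, d) ∈ Delta X := ⟨hcX, hdX, hdcd⟩
  have hsim : MarkovSimilar G a b c d := by
    refine ⟨{u}, Set.finite_singleton u, ?_, ?_⟩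
    · intro t ht
      rw [Set.mem_singleton_iff] at ht
      exact ⟨hab t ht, hcd t ht⟩
    · intro t ht
      have htv : t ≠ v := by
        rintro rfl
        rcases ht with ht | ⟨_, w, hw, hadj⟩
        · exact hne (Set.mem_singleton_iff.1 ht).symm
        · rw [Set.mem_singleton_iff] at hw
          subst hw
          exact huv hadj.symm
      constructor
      · simp only [hadef, hcdef, patch, Finset.mem_insert, htv, false_or]
      · simp only [hbdef, hddef, patch, Finset.mem_insert, htv, false_or]
  have h1 : M a b = M c d := hM.2.2 a b c d hDab hDcd hsim
  have h2 : M a b = M (fun _ => s) b - M (fun _ => s) a :=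
    M_sub hM hstar haX hbX (patch_diff_star z E) (patch_diff_star z _)
  have h3 : M c d = M (fun _ => s) d - M (fun _ => s) c :=
    M_sub hM hstar hcX hdX (patch_diff_star z _) (patch_diff_star z _)
  simp only [phiC]
  rw [← hadef, ← hbdef, ← hcdef, ← hddef]
  linarith

lemma alt_sum_zero (φ : Finset V → ℝ) (u v : V) (F₀ : Finset V) (hne : u ≠ v)
    (hu : u ∉ F₀) (hv : v ∉ F₀)
    (hswap : ∀ E ∈ F₀.powerset, φ (insert u (insert v E)) - φ (insert v E)
      = φ (insert u E) - φ E) (n : ℕ) :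
    ∑ E ∈ (insert u (insert v F₀)).powerset, (-1 : ℝ) ^ (n + E.card) * φ E = 0 := by
  classical
  have huvF : u ∉ insert v F₀ := by simp [hne, hu]
  have comb : ∀ f g : Finset V → ℝ,
      ((∑ E ∈ F₀.powerset, f E) + ∑ E ∈ F₀.powerset, g E)
        = ∑ E ∈ F₀.powerset, (f E + g E) :=
    fun f g => Finset.sum_add_distrib.symm
  rw [Finset.sum_powerset_insert huvF, Finset.sum_powerset_insert hv,
    Finset.sum_powerset_insert hv, comb, comb, comb]
  refine Finset.sum_eq_zero fun E hE => ?_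
  have hEF : E ⊆ F₀ := Finset.mem_powerset.1 hE
  have huE : u ∉ E := fun h => hu (hEF h)
  have hvE : v ∉ E := fun h => hv (hEF h)
  have huvE : u ∉ insert v E := by simp [hne, huE]
  rw [Finset.card_insert_of_notMem hvE, Finset.card_insert_of_notMem huE,
    Finset.card_insert_of_notMem huvE, Finset.card_insert_of_notMem hvE]
  have hsw := hswap E hE
  linear_combination ((-1 : ℝ) ^ (n + E.card)) * hsw

lemma psiC_nonclique {G : SimpleGraph V} {X : Set (V → A)} {M : (V → A) → (V → A) → ℝ}
    {s : A} (hM : IsMarkovCocycle G X M) (hs : IsSafeSymbol X s)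
    (hstar : (fun _ : V => s) ∈ X) {z : V → A} (hz : z ∈ X) (F : Finset V)
    (hcl : ¬ G.IsClique (↑F : Set V)) : psiC M s z F = 0 := by
  classical
  rw [SimpleGraph.isClique_iff, Set.Pairwise] at hcl
  push_neg at hcl
  obtain ⟨u, hu, v, hv, hne, hadj⟩ := hcl
  rw [Finset.mem_coe] at hu hv
  set F₀ : Finset V := (F.erase u).erase v with hF₀
  have hvF₀ : v ∉ F₀ := Finset.notMem_erase v _
  have huF₀ : u ∉ F₀ := fun h => Finset.notMem_erase u _ (Finset.mem_of_mem_erase h)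
  have hFeq : F = insert u (insert v F₀) := by
    rw [hF₀, Finset.insert_erase (Finset.mem_erase.2 ⟨hne.symm, hv⟩),
      Finset.insert_erase hu]
  have hpow : F.powerset = (insert u (insert v F₀)).powerset := by rw [← hFeq]
  unfold psiC
  rw [hpow]
  exact alt_sum_zero (phiC M s z) u v F₀ hne huF₀ hvF₀
    (fun E hE => phi_swap hM hs hstar hz hadj hne E
      (fun h => huF₀ (Finset.mem_powerset.1 hE h))
      (fun h => hvF₀ (Finset.mem_powerset.1 hE h))) F.card

end Statement4Aux
/-- strong Hammersley-Clifford theorem, part 1. On a topological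
Markov field with a safe symbol, every Markov cocycle is a Gibbs cocycle with a
nearest neighbour interaction: `𝐌_X = 𝐆_X`. -/
theorem statement4 [Countable V] [Fintype A] [TopologicalSpace A] [DiscreteTopology A]
    (G : SimpleGraph V) (hlf : ∀ v : V, (G.neighborSet v).Finite)
    (X : Set (V → A)) (hX : IsTMF G X) (s : A) (hs : IsSafeSymbol X s) :
    markovSet G X = gibbsSet G X := by
  classical
  ext M
  simp only [markovSet, gibbsSet, Set.mem_setOf_eq]
  constructor
  · -- Markov ⟹ Gibbs
    intro hM
    refine ⟨hM.1, ?_⟩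
    by_cases hXne : X.Nonempty
    · obtain ⟨x₀, hx₀⟩ := hXne
      have hstar : (fun _ : V => s) ∈ X := by
        have h0 := hs x₀ hx₀ ∅
        convert h0 using 1
        funext v
        simp
      refine ⟨Uof G M s, Uof_isNN G M s, ?_⟩
      rintro x y ⟨hx, hy, hd⟩
      have hDbar : ({v | x v ≠ y v} ∪ boundary G {v | x v ≠ y v}).Finite :=
        closure_finite G hlf hd
      set DF : Finset V := hDbar.toFinset with hDFdef
      have hmemDF : ∀ w, w ∈ DF ↔
          w ∈ ({v | x v ≠ y v} ∪ boundary G {v | x v ≠ y v}) := by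
        intro w
        rw [hDFdef, Set.Finite.mem_toFinset]
      have hx'X : patch s x DF ∈ X := patch_mem hs hx DF
      have hy'X : patch s y DF ∈ X := patch_mem hs hy DF
      have hxy' : ∀ w, x w = y w → patch s x DF w = patch s y DF w := by
        intro w hw
        by_cases h : w ∈ DF <;> simp [patch, h, hw]
      have hd' : {v | patch s x DF v ≠ patch s y DF v}.Finite := by
        refine hd.subset fun w hw => ?_
        by_contra hc
        exact hw (hxy' w (not_not.1 hc))
      have hsim : MarkovSimilar G x y (patch s x DF) (patch s y DF) := by
        refine ⟨{v | x v ≠ y v}, hd, ?_, ?_⟩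
        · intro u hu
          have hxyu : x u = y u := by by_contra hc; exact hu hc
          exact ⟨hxyu, hxy' u hxyu⟩
        · intro u hu
          have huDF : u ∈ DF := (hmemDF u).2 hu
          constructor <;> simp [patch, huDF]
      have h1 : M x y = M (patch s x DF) (patch s y DF) :=
        hM.2.2 x y _ _ ⟨hx, hy, hd⟩ ⟨hx'X, hy'X, hd'⟩ hsim
      have h2 : M (patch s x DF) (patch s y DF)
          = M (fun _ => s) (patch s y DF) - M (fun _ => s) (patch s x DF) :=
        M_sub hM hstar hx'X hy'X (patch_diff_star x DF) (patch_diff_star y DF)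
      have hC : ∀ F : Set V, G.IsClique F → (∃ v ∈ F, x v ≠ y v) → F ⊆ ↑DF := by
        rintro F hcl ⟨v, hvF, hv⟩
        have hsubs := clique_subset_closure hcl hvF (show v ∈ {v | x v ≠ y v} from hv)
        rwa [hDFdef, Set.Finite.coe_toFinset]
      have key : ∀ z : V → A, z ∈ X →
          ∑ F ∈ DF.powerset, Uof G M s ↑F ((↑F : Set V).restrict z)
            = M (fun _ => s) (patch s z DF) := by
        intro z hzX
        have hz'X : patch s z DF ∈ X := patch_mem hs hzX DF
        have hcongr : ∀ F ∈ DF.powerset,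
            Uof G M s ↑F ((↑F : Set V).restrict z) = psiC M s (patch s z DF) F := by
          intro F hF
          have hFsub : F ⊆ DF := Finset.mem_powerset.1 hF
          by_cases hcl : G.IsClique (↑F : Set V)
          · rw [Uof_coe F hcl z]
            exact psiC_congr fun w hw => by simp [patch, hFsub hw]
          · rw [Uof_isNN G M s ↑F (fun hh => hcl hh.2) _,
              psiC_nonclique hM hs hstar hz'X F hcl]
        rw [Finset.sum_congr rfl hcongr]
        unfold psiC
        rw [mobius_sum DF (phiC M s (patch s z DF))]
        unfold phiC
        congr 1
        funext w
        by_cases hw : w ∈ DF <;> simp [patch, hw]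
      rw [gibbsSum_eq_sum (Uof_isNN G M s) x y DF hC, Finset.sum_sub_distrib,
        key x hx, key y hy, h1, h2]
    · refine ⟨fun _ _ => 0, fun F h p => rfl, ?_⟩
      rintro x y ⟨hxX, -, -⟩
      exact absurd ⟨x, hxX⟩ hXne
  · -- Gibbs ⟹ Markov
    rintro ⟨hzero, U, hU, hgibbs⟩
    refine ⟨hzero, ?_, ?_⟩
    · rintro x y z ⟨hx, hy, hdxy⟩ ⟨hy2, hz, hdyz⟩
      have hdxz : {v | x v ≠ z v}.Finite := by
        refine (hdxy.union hdyz).subset fun v hv => ?_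
        by_contra hc
        simp only [Set.mem_union, Set.mem_setOf_eq, not_or, not_not] at hc
        exact hv (hc.1.trans hc.2)
      have hDf : ({v | x v ≠ y v} ∪ {v | y v ≠ z v}).Finite := hdxy.union hdyz
      have hclos := closure_finite G hlf hDf
      set C : Finset V := hclos.toFinset with hCdef
      have mk : ∀ p q : V → A,
          (∀ v, p v ≠ q v → v ∈ ({v | x v ≠ y v} ∪ {v | y v ≠ z v})) →
          ∀ F : Set V, G.IsClique F → (∃ v ∈ F, p v ≠ q v) → F ⊆ ↑C := by
        rintro p q hpq F hcl ⟨v, hvF, hv⟩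
        have hsubs := clique_subset_closure hcl hvF (hpq v hv)
        rwa [hCdef, Set.Finite.coe_toFinset]
      have hxzC : ∀ v, x v ≠ z v → v ∈ ({v | x v ≠ y v} ∪ {v | y v ≠ z v}) := by
        intro v hv
        by_cases h : x v = y v
        · exact Or.inr fun hyz => hv (h.trans hyz)
        · exact Or.inl h
      rw [hgibbs x y ⟨hx, hy, hdxy⟩, hgibbs y z ⟨hy, hz, hdyz⟩,
        hgibbs x z ⟨hx, hz, hdxz⟩,
        gibbsSum_eq_sum hU x y C (mk x y fun v hv => Or.inl hv),
        gibbsSum_eq_sum hU y z C (mk y z fun v hv => Or.inr hv),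
        gibbsSum_eq_sum hU x z C (mk x z hxzC)]
      simp only [Finset.sum_sub_distrib]
      ring
    · rintro x y z w hxy hzw ⟨S, hSfin, hout, hin⟩
      have hclos := closure_finite G hlf hSfin
      set C : Finset V := hclos.toFinset with hCdef
      have hCxy : ∀ F : Set V, G.IsClique F → (∃ v ∈ F, x v ≠ y v) → F ⊆ ↑C := by
        rintro F hcl ⟨v, hvF, hv⟩
        have hvS : v ∈ S := by
          by_contra hc
          exact hv (hout v hc).1
        have hsubs := clique_subset_closure hcl hvF hvS
        rwa [hCdef, Set.Finite.coe_toFinset]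
      have hCzw : ∀ F : Set V, G.IsClique F → (∃ v ∈ F, z v ≠ w v) → F ⊆ ↑C := by
        rintro F hcl ⟨v, hvF, hv⟩
        have hvS : v ∈ S := by
          by_contra hc
          exact hv (hout v hc).2
        have hsubs := clique_subset_closure hcl hvF hvS
        rwa [hCdef, Set.Finite.coe_toFinset]
      rw [hgibbs x y hxy, hgibbs z w hzw,
        gibbsSum_eq_sum hU x y C hCxy, gibbsSum_eq_sum hU z w C hCzw]
      refine Finset.sum_congr rfl fun F hF => ?_
      have hFsub : ∀ a : V, a ∈ (↑F : Set V) → a ∈ S ∪ boundary G S := by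
        intro a ha
        have haC : a ∈ C := Finset.mem_powerset.1 hF (Finset.mem_coe.1 ha)
        rw [hCdef, Set.Finite.mem_toFinset] at haC
        exact haC
      have hrx : (↑F : Set V).restrict x = (↑F : Set V).restrict z :=
        funext fun a => (hin a (hFsub a a.2)).1
      have hry : (↑F : Set V).restrict y = (↑F : Set V).restrict w :=
        funext fun a => (hin a (hFsub a a.2)).2
      rw [hrx, hry]
end HC
end

section
/- Let X be an n.n.constraint space, M a Markov cocycle and V a nearest neighbour interaction on X. Then the relation 'being V-good' (viewed as the relation {(x,y) : (x,y) ∈ Δ_X is V-good} together with the diagonal) is an equivalence relation on X; moreover if (x,y), (z,w) ∈ Δ_X are Markov-similar, then (x,y) is V-good if and only if (z,w) is V-good. -/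
open scoped Classical

namespace HC

variable {V : Type*} {A : Type*}

/-- The `V`-good relation together with the diagonal. -/
def goodRel (X : Set (V → A)) (M : (V → A) → (V → A) → ℝ)
    (U : ∀ F : Set V, (F → A) → ℝ) (x y : V → A) : Prop :=
  x = y ∨ ((x, y) ∈ Delta X ∧ VGood M U x y)

lemma support_finite_aux (G : SimpleGraph V)
    (hlf : ∀ v : V, (G.neighborSet v).Finite)
    (U : ∀ F : Set V, (F → A) → ℝ) (hU : IsNNInteraction G U)
    {x y : V → A} (hfin : {v | x v ≠ y v}.Finite) :
    (Function.support fun F : Set V =>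
      U F (F.restrict y) - U F (F.restrict x)).Finite := by
  have hK : (⋃ v ∈ {v | x v ≠ y v}, insert v (G.neighborSet v)).Finite :=
    hfin.biUnion fun v _ => (hlf v).insert v
  refine hK.finite_subsets.subset ?_
  intro F hF
  simp only [Function.mem_support] at hF
  by_cases hc : F.Finite ∧ G.IsClique F
  · obtain ⟨v, hvF, hvD⟩ : ∃ v ∈ F, x v ≠ y v := by
      by_contra h
      push_neg at h
      have : F.restrict y = F.restrict x := by
        funext u; exact (h u u.2).symm
      rw [this] at hF; simp at hF
    intro u huF
    refine Set.mem_biUnion hvD ?_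
    by_cases huv : u = v
    · exact huv ▸ Set.mem_insert _ _
    · exact Set.mem_insert_of_mem _ (hc.2 hvF huF (Ne.symm huv))
  · exfalso; rw [hU F hc, hU F hc] at hF; simp at hF

lemma gibbsSum_neg (U : ∀ F : Set V, (F → A) → ℝ) (x y : V → A) :
    gibbsSum U y x = -gibbsSum U x y := by
  unfold gibbsSum
  rw [← finsum_neg_distrib]
  exact finsum_congr fun F => by ring

lemma gibbsSum_add (G : SimpleGraph V)
    (hlf : ∀ v : V, (G.neighborSet v).Finite)
    (U : ∀ F : Set V, (F → A) → ℝ) (hU : IsNNInteraction G U)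
    {x y z : V → A} (hxy : {v | x v ≠ y v}.Finite) (hyz : {v | y v ≠ z v}.Finite) :
    gibbsSum U x z = gibbsSum U x y + gibbsSum U y z := by
  unfold gibbsSum
  rw [← finsum_add_distrib (support_finite_aux G hlf U hU hxy)
    (support_finite_aux G hlf U hU hyz)]
  exact finsum_congr fun F => by ring

lemma gibbsSum_sim (G : SimpleGraph V)
    (U : ∀ F : Set V, (F → A) → ℝ) (hU : IsNNInteraction G U)
    {x y z w : V → A} (h : MarkovSimilar G x y z w) :
    gibbsSum U x y = gibbsSum U z w := by
  obtain ⟨S, _, hout, hin⟩ := h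
  refine finsum_congr fun F => ?_
  by_cases hc : F.Finite ∧ G.IsClique F
  · by_cases hmeet : ∃ v ∈ F, v ∈ S
    · obtain ⟨v, hvF, hvS⟩ := hmeet
      have hFin : ∀ u ∈ F, u ∈ S ∪ boundary G S := by
        intro u huF
        by_cases huS : u ∈ S
        · exact Or.inl huS
        · refine Or.inr ⟨huS, v, hvS, ?_⟩
          exact hc.2 huF hvF (fun h => huS (h ▸ hvS))
      have hx : F.restrict x = F.restrict z := funext fun u => (hin u (hFin u u.2)).1
      have hy : F.restrict y = F.restrict w := funext fun u => (hin u (hFin u u.2)).2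
      rw [hx, hy]
    · push_neg at hmeet
      have hx : F.restrict x = F.restrict y := funext fun u => (hout u (hmeet u u.2)).1
      have hz : F.restrict z = F.restrict w := funext fun u => (hout u (hmeet u u.2)).2
      rw [hx, hz]; ring
  · rw [hU F hc, hU F hc, hU F hc, hU F hc]

/-- `V`-goodness (together with the diagonal) is an equivalence
relation on `X`, and it is preserved by Markov similarity. -/
theorem statement6 [Countable V] [Fintype A]
    (G : SimpleGraph V) (hlf : ∀ v : V, (G.neighborSet v).Finite)
    (X : Set (V → A)) (hX : IsNNConstraint G X)
    (M : (V → A) → (V → A) → ℝ) (hM : IsMarkovCocycle G X M)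
    (U : ∀ F : Set V, (F → A) → ℝ) (hU : IsNNInteraction G U) :
    ((∀ x ∈ X, goodRel X M U x x) ∧
      (∀ x ∈ X, ∀ y ∈ X, goodRel X M U x y → goodRel X M U y x) ∧
      (∀ x ∈ X, ∀ y ∈ X, ∀ z ∈ X,
        goodRel X M U x y → goodRel X M U y z → goodRel X M U x z)) ∧
    (∀ x y z w : V → A, (x, y) ∈ Delta X → (z, w) ∈ Delta X →
      MarkovSimilar G x y z w → (VGood M U x y ↔ VGood M U z w)) := by
  obtain ⟨h0, hadd, hsim⟩ := hM
  have hself : ∀ x ∈ X, (x, x) ∈ Delta X := by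
    intro x hx
    refine ⟨hx, hx, ?_⟩
    convert Set.finite_empty
    simp
  have hMself : ∀ x ∈ X, M x x = 0 := by
    intro x hx
    have := hadd x x x (hself x hx) (hself x hx)
    linarith
  have hswap : ∀ x y : V → A, (x, y) ∈ Delta X → (y, x) ∈ Delta X := by
    intro x y ⟨hx, hy, hf⟩
    refine ⟨hy, hx, hf.subset fun v hv => ?_⟩
    exact fun h => hv h.symm
  refine ⟨⟨fun x _ => Or.inl rfl, ?_, ?_⟩, ?_⟩
  · rintro x hx y hy (rfl | ⟨hΔ, hg⟩)
    · exact Or.inl rfl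
    · refine Or.inr ⟨hswap x y hΔ, ?_⟩
      have h1 : M x y + M y x = 0 := by
        have := hadd x y x hΔ (hswap x y hΔ)
        rw [hMself x hx] at this
        linarith
      unfold VGood at *
      rw [gibbsSum_neg]
      linarith
  · rintro x hx y hy z hz (rfl | ⟨hΔ1, hg1⟩) h2
    · exact h2
    · rcases h2 with rfl | ⟨hΔ2, hg2⟩
      · exact Or.inr ⟨hΔ1, hg1⟩
      · refine Or.inr ⟨⟨hx, hz, (hΔ1.2.2.union hΔ2.2.2).subset fun v hv => ?_⟩, ?_⟩
        · by_cases h : x v = y v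
          · exact Or.inr (fun he => hv (h.trans he))
          · exact Or.inl h
        · unfold VGood at *
          rw [hadd x y z hΔ1 hΔ2, hg1, hg2,
            ← gibbsSum_add G hlf U hU hΔ1.2.2 hΔ2.2.2]
  · intro x y z w hΔ1 hΔ2 hs
    unfold VGood
    rw [hsim x y z w hΔ1 hΔ2 hs, gibbsSum_sim G U hU hs]
end HC
end

section
/- Let 𝒢 be a bipartite countable locally finite graph and G ⊆ Aut(𝒢) a subgroup. Suppose X ⊆ 𝒜^𝒱 is a G-invariant n.n.constraint space and X_a is a fold of X. Then the linear map F : 𝐌^G_X → 𝐌^G_{X_a} given by F(M) = M|_{Δ_{X_a}} is well-defined and surjective, and F(𝐆^G_X) = 𝐆^G_{X_a}. -/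
open scoped Classical

namespace HC

variable {V : Type*} {A : Type*}

/-! ### Auxiliary material for Statement 10 -/

section Aux

variable {G : SimpleGraph V} {S : Subgroup (Equiv.Perm V)} {X Y Xa : Set (V → A)} {a b : A}

/-- Pick an element satisfying `P`, defaulting to `b`. -/
noncomputable def pick (b : A) (P : A → Prop) : A :=
  if h : ∃ c, P c then h.choose else b

lemma pick_spec (b : A) {P : A → Prop} (h : ∃ c, P c) : P (pick b P) := by
  rw [pick, dif_pos h]
  exact h.choose_spec

/-- Fold a single symbol at vertex `v`. -/
noncomputable def foldAt (G : SimpleGraph V) (X : Set (V → A)) (a b : A) (v : V) (c : A) : A :=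
  if c = a then
    (if ∃ w, G.Adj v w then b else pick b (fun c' => c' ≠ a ∧ siteB X v c'))
  else c

/-- The folding map on configurations. -/
noncomputable def foldMap (G : SimpleGraph V) (X : Set (V → A)) (a b : A) (x : V → A) :
    V → A :=
  fun v => foldAt G X a b v (x v)

lemma confAct_apply (g : Equiv.Perm V) (x : V → A) (v : V) : confAct g x v = x (g⁻¹ v) := rfl

lemma confAct_inv_confAct (g : Equiv.Perm V) (x : V → A) :
    confAct g⁻¹ (confAct g x) = x := by
  funext v
  simp [confAct]

lemma confAct_confAct_inv (g : Equiv.Perm V) (x : V → A) :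
    confAct g (confAct g⁻¹ x) = x := by
  funext v
  simp [confAct]

lemma mem_confAct_iff (hXinv : InvariantSpace S X) {g : Equiv.Perm V} (hg : g ∈ S)
    (x : V → A) : confAct g x ∈ X ↔ x ∈ X := by
  constructor
  · intro h
    rw [← hXinv g⁻¹ (S.inv_mem hg)]
    exact ⟨confAct g x, h, confAct_inv_confAct g x⟩
  · intro h
    rw [← hXinv g hg]
    exact ⟨x, h, rfl⟩

lemma siteB_confAct (hXinv : InvariantSpace S X) {g : Equiv.Perm V} (hg : g ∈ S)
    (v : V) (c : A) : siteB X (g⁻¹ v) c ↔ siteB X v c := by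
  constructor
  · rintro ⟨z, hz, hzc⟩
    exact ⟨confAct g z, (mem_confAct_iff hXinv hg z).2 hz, hzc⟩
  · rintro ⟨z, hz, hzc⟩
    refine ⟨confAct g⁻¹ z, (mem_confAct_iff hXinv (S.inv_mem hg) z).2 hz, ?_⟩
    show z (g⁻¹⁻¹ (g⁻¹ v)) = c
    simpa using hzc

lemma adj_exists_confAct (hS : PreservesAdj G S) {g : Equiv.Perm V} (hg : g ∈ S) (v : V) :
    (∃ w, G.Adj (g⁻¹ v) w) ↔ ∃ w, G.Adj v w := by
  constructor
  · rintro ⟨w, h⟩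
    refine ⟨g w, ?_⟩
    have := (hS g hg (g⁻¹ v) w).2 h
    simpa using this
  · rintro ⟨w, h⟩
    exact ⟨g⁻¹ w, (hS g⁻¹ (S.inv_mem hg) v w).2 h⟩

lemma foldMap_confAct (hS : PreservesAdj G S) (hXinv : InvariantSpace S X)
    {g : Equiv.Perm V} (hg : g ∈ S) (x : V → A) :
    foldMap G X a b (confAct g x) = confAct g (foldMap G X a b x) := by
  funext v
  show foldAt G X a b v (x (g⁻¹ v)) = foldAt G X a b (g⁻¹ v) (x (g⁻¹ v))
  unfold foldAt
  by_cases hc : x (g⁻¹ v) = a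
  · rw [if_pos hc, if_pos hc]
    have e1 : (∃ w, G.Adj v w) = (∃ w, G.Adj (g⁻¹ v) w) :=
      propext (adj_exists_confAct hS hg v).symm
    have e2 : (fun c' => c' ≠ a ∧ siteB X v c') = (fun c' => c' ≠ a ∧ siteB X (g⁻¹ v) c') :=
      funext fun c' => propext (and_congr_right fun _ => (siteB_confAct hXinv hg v c').symm)
    rw [e1, e2]
  · rw [if_neg hc, if_neg hc]

lemma foldMap_congr_pt {x y : V → A} {v : V} (h : x v = y v) :
    foldMap G X a b x v = foldMap G X a b y v := by
  unfold foldMap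
  rw [h]

lemma foldMap_of_avoid {x : V → A} (h : ∀ v, x v ≠ a) : foldMap G X a b x = x := by
  funext v
  unfold foldMap foldAt
  rw [if_neg (h v)]

lemma foldMap_avoid (hab : a ≠ b) (hrep : ∀ v, ∃ c, c ≠ a ∧ siteB X v c)
    (x : V → A) (v : V) : foldMap G X a b x v ≠ a := by
  unfold foldMap foldAt
  by_cases hc : x v = a
  · rw [if_pos hc]
    by_cases hw : ∃ w, G.Adj v w
    · rw [if_pos hw]
      exact fun h => hab h.symm
    · rw [if_neg hw]
      exact (pick_spec b (hrep v)).1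
  · rw [if_neg hc]
    exact hc

lemma foldMap_mem (𝓕 : ∀ F : Set V, Set (F → A))
    (hXdef : X = {x : V → A | ∀ F : Set V, F.Finite → G.IsClique F → F.restrict x ∉ 𝓕 F})
    (hbip : Bipartite G)
    (hfc : ∀ v₁ v₂ v₃ : V, G.Adj v₁ v₂ → G.Adj v₂ v₃ → ∀ c : A,
      edgeB X v₁ v₂ a c → edgeB X v₁ v₂ b c ∧ edgeB X v₂ v₃ c b ∧
        ∃ x ∈ X, ∀ u ∈ boundary G (ballSet G v₁ 1), x u = b)
    (hrep : ∀ v, ∃ c, c ≠ a ∧ siteB X v c)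
    {x : V → A} (hx : x ∈ X) : foldMap G X a b x ∈ X := by
  have hmem_iff : ∀ y : V → A,
      y ∈ X ↔ ∀ F : Set V, F.Finite → G.IsClique F → F.restrict y ∉ 𝓕 F := by
    intro y
    rw [hXdef]
    exact Iff.rfl
  have key : ∀ F : Set V, F.Finite → G.IsClique F →
      ∃ z ∈ X, ∀ v ∈ F, z v = foldMap G X a b x v := by
    intro F hF hcl
    by_cases hFa : ∃ v ∈ F, x v = a
    · obtain ⟨v, hvF, hva⟩ := hFa
      by_cases hFw : ∃ w ∈ F, w ≠ v
      · obtain ⟨w, hwF, hwv⟩ := hFw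
        have hadj : G.Adj v w := hcl hvF hwF (Ne.symm hwv)
        have honlyvw : ∀ u ∈ F, u = v ∨ u = w := by
          intro u hu
          by_contra hcon
          push_neg at hcon
          obtain ⟨huv, huw⟩ := hcon
          have h1 : G.Adj u v := hcl hu hvF huv
          have h2 : G.Adj u w := hcl hu hwF huw
          obtain ⟨P₁, P₂, htot, hdisj, hedge⟩ := hbip
          have hd : ∀ z, z ∈ P₁ → z ∈ P₂ → False := fun z hz1 hz2 =>
            Set.disjoint_left.mp hdisj hz1 hz2
          rcases hedge v w hadj with ⟨hv1, hw2⟩ | ⟨hv2, hw1⟩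
          · rcases hedge u v h1 with ⟨hu1, hv2⟩ | ⟨hu2, hv1'⟩
            · exact hd v hv1 hv2
            · rcases hedge u w h2 with ⟨hu1, hw2'⟩ | ⟨hu2', hw1⟩
              · exact hd u hu1 hu2
              · exact hd w hw1 hw2
          · rcases hedge u v h1 with ⟨hu1, hv2'⟩ | ⟨hu2, hv1⟩
            · rcases hedge u w h2 with ⟨hu1', hw2⟩ | ⟨hu2, hw1'⟩
              · exact hd w hw1 hw2
              · exact hd u hu1 hu2
            · exact hd v hv1 hv2
        have hfxv : foldMap G X a b x v = b := by
          unfold foldMap foldAt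
          rw [if_pos hva, if_pos ⟨w, hadj⟩]
        by_cases hwa : x w = a
        · have hfxw : foldMap G X a b x w = b := by
            unfold foldMap foldAt
            rw [if_pos hwa, if_pos ⟨v, hadj.symm⟩]
          have e1 : edgeB X v w a a := ⟨x, hx, hva, hwa⟩
          obtain ⟨⟨y1, hy1, hy1v, hy1w⟩, -, -⟩ := hfc v w v hadj hadj.symm a e1
          have e3 : edgeB X w v a b := ⟨y1, hy1, hy1w, hy1v⟩
          obtain ⟨⟨z, hz, hzw, hzv⟩, -, -⟩ := hfc w v w hadj.symm hadj b e3
          refine ⟨z, hz, fun u hu => ?_⟩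
          rcases honlyvw u hu with rfl | rfl
          · rw [hzv, hfxv]
          · rw [hzw, hfxw]
        · have hfxw : foldMap G X a b x w = x w := by
            unfold foldMap foldAt
            rw [if_neg hwa]
          have e1 : edgeB X v w a (x w) := ⟨x, hx, hva, rfl⟩
          obtain ⟨⟨z, hz, hzv, hzw⟩, -, -⟩ := hfc v w v hadj hadj.symm (x w) e1
          refine ⟨z, hz, fun u hu => ?_⟩
          rcases honlyvw u hu with rfl | rfl
          · rw [hzv, hfxv]
          · rw [hzw, hfxw]
      · push_neg at hFw
        by_cases hvl : ∃ w, G.Adj v w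
        · obtain ⟨w, hadj⟩ := hvl
          have hfxv : foldMap G X a b x v = b := by
            unfold foldMap foldAt
            rw [if_pos hva, if_pos ⟨w, hadj⟩]
          have e1 : edgeB X v w a (x w) := ⟨x, hx, hva, rfl⟩
          obtain ⟨⟨z, hz, hzv, hzw⟩, -, -⟩ := hfc v w v hadj hadj.symm (x w) e1
          refine ⟨z, hz, fun u hu => ?_⟩
          rw [hFw u hu, hzv, hfxv]
        · have hfxv : foldMap G X a b x v = pick b (fun c' => c' ≠ a ∧ siteB X v c') := by
            unfold foldMap foldAt
            rw [if_pos hva, if_neg hvl]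
          obtain ⟨z, hz, hzv⟩ := (pick_spec b (hrep v)).2
          refine ⟨z, hz, fun u hu => ?_⟩
          rw [hFw u hu, hzv, hfxv]
    · push_neg at hFa
      refine ⟨x, hx, fun u hu => ?_⟩
      unfold foldMap foldAt
      rw [if_neg (hFa u hu)]
  rw [hmem_iff]
  intro F hF hcl hpat
  obtain ⟨z, hz, hag⟩ := key F hF hcl
  have hres : F.restrict z = F.restrict (foldMap G X a b x) :=
    funext fun u => hag u u.2
  exact (hmem_iff z).1 hz F hF hcl (hres ▸ hpat)

lemma delta_mono (h : Y ⊆ X) : Delta Y ⊆ Delta X :=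
  fun p hp => ⟨h hp.1, h hp.2.1, hp.2.2⟩

lemma delta_trans {x y z : V → A} (h1 : (x, y) ∈ Delta Y) (h2 : (y, z) ∈ Delta Y) :
    (x, z) ∈ Delta Y := by
  refine ⟨h1.1, h2.2.1, (h1.2.2.union h2.2.2).subset fun v hv => ?_⟩
  by_cases hxy : x v = y v
  · exact Or.inr fun h => hv (hxy.trans h)
  · exact Or.inl hxy

lemma delta_confAct {g : Equiv.Perm V} (hY : ∀ z : V → A, confAct g z ∈ Y ↔ z ∈ Y)
    {x y : V → A} (hxy : (x, y) ∈ Delta Y) :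
    (confAct g x, confAct g y) ∈ Delta Y := by
  refine ⟨(hY x).2 hxy.1, (hY y).2 hxy.2.1, ?_⟩
  have : {v | confAct g x v ≠ confAct g y v} = (fun v => g⁻¹ v) ⁻¹' {v | x v ≠ y v} := rfl
  rw [this]
  exact Set.Finite.preimage ((g⁻¹ : Equiv.Perm V).injective.injOn) hxy.2.2

/-- The folded interaction. -/
noncomputable def foldInt (G : SimpleGraph V) (X : Set (V → A)) (a b : A)
    (U : ∀ F : Set V, (F → A) → ℝ) : ∀ F : Set V, (F → A) → ℝ :=
  fun F p => U F (fun v => foldAt G X a b (↑v) (p v))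

lemma gibbsSum_foldInt (U : ∀ F : Set V, (F → A) → ℝ) (x y : V → A) :
    gibbsSum (foldInt G X a b U) x y = gibbsSum U (foldMap G X a b x) (foldMap G X a b y) :=
  rfl

lemma zero_mem_markov : (fun _ _ => (0 : ℝ)) ∈ markovSetInv G S Y :=
  ⟨⟨fun _ _ _ => rfl, fun _ _ _ _ _ => by norm_num, fun _ _ _ _ _ _ _ => rfl⟩,
    fun _ _ _ _ => rfl⟩

lemma zero_mem_gibbs : (fun _ _ => (0 : ℝ)) ∈ gibbsSetInv G S Y :=
  ⟨fun _ _ _ => rfl, fun _ _ => 0, fun _ _ _ => rfl, fun _ _ _ _ => rfl,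
    fun x y _ => by simp [gibbsSum]⟩

end Aux

/-- Restriction of cocycles to a fold `X_a` of `X` is a well-defined
surjection `𝐌^G_X → 𝐌^G_{X_a}` mapping `𝐆^G_X` onto `𝐆^G_{X_a}`. -/
theorem statement10 [Countable V] [Fintype A]
    (G : SimpleGraph V) (hlf : ∀ v : V, (G.neighborSet v).Finite) (hbip : Bipartite G)
    (S : Subgroup (Equiv.Perm V)) (hS : PreservesAdj G S)
    (X Xa : Set (V → A)) (hX : IsNNConstraint G X) (hXinv : InvariantSpace S X)
    (hfold : IsFoldOf G Xa X) :
    (∀ M ∈ markovSetInv G S X, restrictCocycle Xa M ∈ markovSetInv G S Xa) ∧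
    (∀ N ∈ markovSetInv G S Xa, ∃ M ∈ markovSetInv G S X, restrictCocycle Xa M = N) ∧
    restrictCocycle Xa '' gibbsSetInv G S X = gibbsSetInv G S Xa := by
  obtain ⟨a, b, ⟨hab, hfc⟩, hXaeq⟩ := hfold
  obtain ⟨𝓕, hXdef⟩ := hX
  have hXasub : Xa ⊆ X := by
    rw [hXaeq]
    exact Set.inter_subset_left
  have hXamem : ∀ z : V → A, z ∈ Xa ↔ z ∈ X ∧ ∀ v, z v ≠ a := by
    intro z
    rw [hXaeq]
    exact Iff.rfl
  have hXact : ∀ g ∈ S, ∀ z : V → A, confAct g z ∈ X ↔ z ∈ X := fun g hg z =>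
    mem_confAct_iff hXinv hg z
  have hXaact : ∀ g ∈ S, ∀ z : V → A, confAct g z ∈ Xa ↔ z ∈ Xa := by
    intro g hg z
    rw [hXamem, hXamem, mem_confAct_iff hXinv hg]
    constructor
    · rintro ⟨h1, h2⟩
      refine ⟨h1, fun v => ?_⟩
      have := h2 (g v)
      simpa [confAct] using this
    · rintro ⟨h1, h2⟩
      exact ⟨h1, fun v => h2 _⟩
  -- Part 1 : restriction is well defined
  have part1 : ∀ M ∈ markovSetInv G S X, restrictCocycle Xa M ∈ markovSetInv G S Xa := by
    rintro M ⟨⟨hM0, hMc, hMs⟩, hMi⟩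
    refine ⟨⟨fun x y h => if_neg h, ?_, ?_⟩, ?_⟩
    · intro x y z hxy hyz
      simp only [restrictCocycle]
      rw [if_pos (delta_trans hxy hyz), if_pos hxy, if_pos hyz]
      exact hMc x y z (delta_mono hXasub hxy) (delta_mono hXasub hyz)
    · intro x y z w hxy hzw hsim
      simp only [restrictCocycle]
      rw [if_pos hxy, if_pos hzw]
      exact hMs x y z w (delta_mono hXasub hxy) (delta_mono hXasub hzw) hsim
    · intro g hg x y
      simp only [restrictCocycle]
      by_cases h : (x, y) ∈ Delta Xa
      · rw [if_pos h, if_pos (delta_confAct (hXaact g hg) h)]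
        exact hMi g hg x y
      · have h' : (confAct g x, confAct g y) ∉ Delta Xa := by
          intro hcon
          apply h
          have := delta_confAct (hXaact g⁻¹ (S.inv_mem hg)) hcon
          rwa [confAct_inv_confAct, confAct_inv_confAct] at this
        rw [if_neg h, if_neg h']
  -- Part 3, forward inclusion
  have part3fwd : restrictCocycle Xa '' gibbsSetInv G S X ⊆ gibbsSetInv G S Xa := by
    rintro _ ⟨M, ⟨hM0, U, hUnn, hUinv, hMU⟩, rfl⟩
    refine ⟨fun x y h => if_neg h, U, hUnn, hUinv, ?_⟩
    intro x y hxy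
    simp only [restrictCocycle]
    rw [if_pos hxy]
    exact hMU x y (delta_mono hXasub hxy)
  rcases Set.eq_empty_or_nonempty Xa with hE | hNE
  · -- degenerate case : the fold is empty
    have hnotD : ∀ x y : V → A, (x, y) ∉ Delta Xa := by
      intro x y h
      rw [hE] at h
      exact absurd h.1 (Set.notMem_empty x)
    have hrz : ∀ M : (V → A) → (V → A) → ℝ, restrictCocycle Xa M = fun _ _ => (0 : ℝ) := by
      intro M
      funext x y
      exact if_neg (hnotD x y)
    refine ⟨part1, ?_, ?_⟩
    · intro N hN
      have hNz : N = fun _ _ => (0 : ℝ) :=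
        funext fun x => funext fun y => hN.1.1 x y (hnotD x y)
      exact ⟨fun _ _ => 0, zero_mem_markov, by rw [hrz, hNz]⟩
    · refine Set.Subset.antisymm part3fwd ?_
      intro N hN
      have hNz : N = fun _ _ => (0 : ℝ) :=
        funext fun x => funext fun y => hN.1 x y (hnotD x y)
      exact ⟨fun _ _ => 0, zero_mem_gibbs, by rw [hrz, hNz]⟩
  · -- main case : the fold is nonempty
    obtain ⟨x₀, hx₀⟩ := hNE
    have hx₀' := (hXamem x₀).1 hx₀
    have hrep : ∀ v, ∃ c, c ≠ a ∧ siteB X v c := fun v =>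
      ⟨x₀ v, hx₀'.2 v, x₀, hx₀'.1, rfl⟩
    have hfmem : ∀ x ∈ X, foldMap G X a b x ∈ Xa := by
      intro x hx
      rw [hXamem]
      exact ⟨foldMap_mem 𝓕 hXdef hbip hfc hrep hx, foldMap_avoid hab hrep x⟩
    have hfid : ∀ x ∈ Xa, foldMap G X a b x = x := fun x hx =>
      foldMap_of_avoid ((hXamem x).1 hx).2
    have hfdelta : ∀ x y : V → A, (x, y) ∈ Delta X →
        (foldMap G X a b x, foldMap G X a b y) ∈ Delta Xa := by
      intro x y hxy
      refine ⟨hfmem x hxy.1, hfmem y hxy.2.1, hxy.2.2.subset fun v hv h => ?_⟩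
      exact hv (foldMap_congr_pt h)
    have hfsim : ∀ x y z w : V → A, MarkovSimilar G x y z w →
        MarkovSimilar G (foldMap G X a b x) (foldMap G X a b y) (foldMap G X a b z)
          (foldMap G X a b w) := by
      rintro x y z w ⟨T, hT, hout, hin⟩
      exact ⟨T, hT,
        fun u hu => ⟨foldMap_congr_pt (hout u hu).1, foldMap_congr_pt (hout u hu).2⟩,
        fun u hu => ⟨foldMap_congr_pt (hin u hu).1, foldMap_congr_pt (hin u hu).2⟩⟩
    refine ⟨part1, ?_, ?_⟩
    · -- Part 2 : surjectivity on Markov cocycles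
      rintro N ⟨⟨hN0, hNc, hNs⟩, hNi⟩
      obtain ⟨M, hMdef⟩ : ∃ M : (V → A) → (V → A) → ℝ, ∀ x y : V → A,
          M x y = if (x, y) ∈ Delta X then
            N (foldMap G X a b x) (foldMap G X a b y) else 0 :=
        ⟨_, fun _ _ => rfl⟩
      refine ⟨M, ⟨⟨?_, ?_, ?_⟩, ?_⟩, ?_⟩
      · intro x y h
        rw [hMdef, if_neg h]
      · intro x y z hxy hyz
        rw [hMdef, hMdef, hMdef, if_pos (delta_trans hxy hyz), if_pos hxy, if_pos hyz]
        exact hNc _ _ _ (hfdelta x y hxy) (hfdelta y z hyz)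
      · intro x y z w hxy hzw hsim
        rw [hMdef, hMdef, if_pos hxy, if_pos hzw]
        exact hNs _ _ _ _ (hfdelta x y hxy) (hfdelta z w hzw) (hfsim x y z w hsim)
      · intro g hg x y
        by_cases h : (x, y) ∈ Delta X
        · rw [hMdef, hMdef, if_pos (delta_confAct (hXact g hg) h), if_pos h,
            foldMap_confAct hS hXinv hg, foldMap_confAct hS hXinv hg]
          exact hNi g hg _ _
        · have h' : (confAct g x, confAct g y) ∉ Delta X := by
            intro hcon
            apply h
            have := delta_confAct (hXact g⁻¹ (S.inv_mem hg)) hcon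
            rwa [confAct_inv_confAct, confAct_inv_confAct] at this
          rw [hMdef, hMdef, if_neg h', if_neg h]
      · funext x y
        simp only [restrictCocycle]
        by_cases h : (x, y) ∈ Delta Xa
        · rw [if_pos h, hMdef, if_pos (delta_mono hXasub h), hfid x h.1, hfid y h.2.1]
        · rw [if_neg h]
          exact (hN0 x y h).symm
    · -- Part 3, backward inclusion
      refine Set.Subset.antisymm part3fwd ?_
      rintro N ⟨hN0, U, hUnn, hUinv, hNU⟩
      obtain ⟨M, hMdef⟩ : ∃ M : (V → A) → (V → A) → ℝ, ∀ x y : V → A,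
          M x y = if (x, y) ∈ Delta X then gibbsSum (foldInt G X a b U) x y else 0 :=
        ⟨_, fun _ _ => rfl⟩
      refine ⟨M, ⟨?_, foldInt G X a b U, ?_, ?_, ?_⟩, ?_⟩
      · intro x y h
        rw [hMdef, if_neg h]
      · intro F hF p
        exact hUnn F hF _
      · intro g hg F x
        have key : foldInt G X a b U (⇑g '' F) ((⇑g '' F).restrict (confAct g x))
            = U (⇑g '' F) ((⇑g '' F).restrict (foldMap G X a b (confAct g x))) := rfl
        rw [key, foldMap_confAct hS hXinv hg]
        exact hUinv g hg F (foldMap G X a b x)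
      · intro x y hxy
        rw [hMdef, if_pos hxy]
      · funext x y
        simp only [restrictCocycle]
        by_cases h : (x, y) ∈ Delta Xa
        · rw [if_pos h, hMdef, if_pos (delta_mono hXasub h), gibbsSum_foldInt,
            hfid x h.1, hfid y h.2.1]
          exact (hNU x y h).symm
        · rw [if_neg h]
          exact (hN0 x y h).symm
end HC
end
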